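/- Let G be a finite simple graph and M a maximum matching of G. Let B_1,…,B_m be pairwise disjoint subsets of V(G) such that each B_i contains both endpoints of exactly one edge of M and the induced subgraph G[B_i] contains no path of order at least 4. Let G1 be the set of all edges {u,v} of G such that u ∈ B_i and v ∉ B_i for some i. Among all path-cycle covers of the graph (V(G), G1), let C be one that saturates the maximum possible number of the sets B_1,…,B_m, and let ℓ be the number of sets B_i not saturated by C. Then 2(|M| − ℓ) ≥ (4/5)·opt(G). -/

import Mathlib

open SimpleGraph

/-- Degree of a vertex in a subgraph, via `Set.ncard` of the neighbor set. -/
noncomputable def subDeg {V : Type*} {G : SimpleGraph V} (H : G.Subgraph) (v : V) : ℕ :=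
  (H.neighborSet v).ncard

/-- A subgraph is a path: it is a single vertex, or it is connected with exactly two
vertices of degree 1 and all other vertices of degree 2. -/
def IsPathSubgraph {V : Type*} {G : SimpleGraph V} (P : G.Subgraph) : Prop :=
  P.Connected ∧
  ((∃ v, P.verts = {v}) ∨
    (({v ∈ P.verts | subDeg P v = 1}).ncard = 2 ∧
      ∀ v ∈ P.verts, subDeg P v = 1 ∨ subDeg P v = 2))

/-- `x` is an endpoint of the path subgraph `P` (for paths of order at least 2). -/
def IsPathEndpoint {V : Type*} {G : SimpleGraph V} (P : G.Subgraph) (x : V) : Prop :=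
  x ∈ P.verts ∧ subDeg P x = 1

/-- A matching of `G`: a finite set of edges of `G`, no two of which share an endpoint. -/
def IsMatchingSet {V : Type*} (G : SimpleGraph V) (M : Finset (Sym2 V)) : Prop :=
  ↑M ⊆ G.edgeSet ∧ ∀ e ∈ M, ∀ f ∈ M, e ≠ f → ∀ v : V, v ∈ e → v ∉ f

/-- A maximum matching of `G`. -/
def IsMaxMatchingSet {V : Type*} (G : SimpleGraph V) (M : Finset (Sym2 V)) : Prop :=
  IsMatchingSet G M ∧ ∀ M' : Finset (Sym2 V), IsMatchingSet G M' → M'.card ≤ M.card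

/-- There is a collection of vertex-disjoint path subgraphs of `G`, each of order at
least 4, whose total number of vertices `n` satisfies `p n`. -/
def HasDisjointPathsCovering {V : Type*} (G : SimpleGraph V) (p : ℕ → Prop) : Prop :=
  ∃ Ps : Set G.Subgraph,
    (∀ P ∈ Ps, IsPathSubgraph P ∧ 4 ≤ P.verts.ncard) ∧
    (Ps.Pairwise fun P Q => Disjoint P.verts Q.verts) ∧
    p ((⋃ P ∈ Ps, P.verts).ncard)

/-- There is a collection of vertex-disjoint path subgraphs of `G`, each of order at
least 4, covering at least `N` vertices in total. -/
def HasDisjointPathCover {V : Type*} (G : SimpleGraph V) (N : ℕ) : Prop :=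
  HasDisjointPathsCovering G fun n => N ≤ n

/-- `opt G`: the maximum total number of vertices in a collection of vertex-disjoint
paths of `G`, each of order at least 4. -/
noncomputable def optValue {V : Type*} (G : SimpleGraph V) : ℕ :=
  sSup {n : ℕ |
    ∃ Ps : Set G.Subgraph,
      (∀ P ∈ Ps, IsPathSubgraph P ∧ 4 ≤ P.verts.ncard) ∧
      (Ps.Pairwise fun P Q => Disjoint P.verts Q.verts) ∧
      n = (⋃ P ∈ Ps, P.verts).ncard}

/-- Degree of a vertex in the spanning subgraph determined by an edge set `F`. -/
noncomputable def edgeDeg {W : Type*} (F : Set (Sym2 W)) (v : W) : ℕ :=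
  {e ∈ F | v ∈ e}.ncard

/-- An edge set `C` saturates a vertex set `B` if some edge of `C` has an endpoint in `B`. -/
def Saturates {W : Type*} (C : Set (Sym2 W)) (B : Set W) : Prop :=
  ∃ e ∈ C, ∃ v ∈ B, v ∈ e

set_option linter.unusedSectionVars false
section core
variable {V : Type*} [Fintype V] [DecidableEq V] {G : SimpleGraph V}

lemma two_nbrs {W : Type*} {H : SimpleGraph W} {u w : W} (p : H.Walk u w) (hp : p.IsPath)
    {x : W} (hx : x ∈ p.support) (hu : x ≠ u) (hw : x ≠ w) :
    ∃ a b, a ≠ b ∧ a ∈ p.support ∧ b ∈ p.support ∧ H.Adj x a ∧ H.Adj x b := by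
  induction p with
  | nil => simp at hx; exact absurd hx hu
  | @cons u' v' w' h q ih =>
    rw [SimpleGraph.Walk.support_cons, List.mem_cons] at hx
    rcases hx with rfl | hx
    · exact absurd rfl hu
    rw [SimpleGraph.Walk.cons_isPath_iff] at hp
    by_cases hxv : x = v'
    · subst hxv
      cases q with
      | nil => exact absurd rfl hw
      | @cons _ v2 _ h2 q2 =>
        refine ⟨u', v2, ?_, ?_, ?_, h.symm, h2⟩
        · rintro rfl
          exact hp.2 (by simp [SimpleGraph.Walk.support_cons])
        · simp [SimpleGraph.Walk.support_cons]
        · simp [SimpleGraph.Walk.support_cons]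
    · obtain ⟨a, b, hab, ha, hb, h1, h2⟩ := ih hp.1 hx hxv hw
      exact ⟨a, b, hab, by simp [SimpleGraph.Walk.support_cons, ha],
        by simp [SimpleGraph.Walk.support_cons, hb], h1, h2⟩

lemma exists_adj_of_connected {P : G.Subgraph} (hc : P.Connected) {u w : V}
    (hu : u ∈ P.verts) (hw : w ∈ P.verts) (hne : u ≠ w) : ∃ y, P.Adj u y := by
  have hr : P.coe.Reachable ⟨u, hu⟩ ⟨w, hw⟩ := hc.preconnected _ _
  obtain ⟨p⟩ := hr
  obtain ⟨c, h, -⟩ := SimpleGraph.Walk.exists_eq_cons_of_ne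
    (by simpa [Subtype.ext_iff] using hne) p
  exact ⟨c.1, h⟩

lemma reach_del {P : G.Subgraph} {D : Set V} {a b : ↥P.verts} (p : P.coe.Walk a b)
    (hD : ∀ v ∈ p.support, (v : V) ∉ D)
    (ha : (a : V) ∈ (P.deleteVerts D).verts) (hb : (b : V) ∈ (P.deleteVerts D).verts) :
    (P.deleteVerts D).coe.Reachable ⟨a, ha⟩ ⟨b, hb⟩ := by
  induction p with
  | nil => exact SimpleGraph.Reachable.refl _
  | @cons a c b h q ih =>
    have hc : (c : V) ∈ (P.deleteVerts D).verts := by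
      rw [SimpleGraph.Subgraph.deleteVerts_verts]
      exact ⟨c.2, hD c (by simp [SimpleGraph.Walk.support_cons])⟩
    have hadj : (P.deleteVerts D).Adj a c := by
      rw [SimpleGraph.Subgraph.deleteVerts_adj]
      refine ⟨a.2, ?_, c.2, ?_, h⟩
      · simpa using (SimpleGraph.Subgraph.deleteVerts_verts ▸ ha).2
      · simpa using (SimpleGraph.Subgraph.deleteVerts_verts ▸ hc).2
    have h1 : (P.deleteVerts D).coe.Adj ⟨a, ha⟩ ⟨c, hc⟩ := hadj
    exact h1.reachable.trans (ih (fun v hv => hD v (by simp [SimpleGraph.Walk.support_cons, hv])) hc hb)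

lemma edge_mem_verts {P : G.Subgraph} {e : Sym2 V} (he : e ∈ P.edgeSet) {v : V} (hv : v ∈ e) :
    v ∈ P.verts := by
  induction e with
  | _ x y =>
    rw [SimpleGraph.Subgraph.mem_edgeSet] at he
    rcases Sym2.mem_iff.1 hv with rfl | rfl
    · exact P.edge_vert he
    · exact P.edge_vert he.symm

lemma path_matching : ∀ (n : ℕ) (P : G.Subgraph), P.verts.ncard = n → P.Connected →
    (∀ v ∈ P.verts, subDeg P v ≤ 2) →
    (n ≤ 2 ∨ ∃ v ∈ P.verts, subDeg P v ≤ 1) →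
    ∃ S : Finset (Sym2 V), ↑S ⊆ P.edgeSet ∧
      (∀ e ∈ S, ∀ f ∈ S, e ≠ f → ∀ v, v ∈ e → v ∉ f) ∧ n ≤ 2 * S.card + 1 := by
  intro n
  induction n using Nat.strong_induction_on with
  | _ n IH =>
  intro P hn hc hdeg hinv
  by_cases h1 : n ≤ 1
  · exact ⟨∅, by simp, by simp, by omega⟩
  by_cases h2 : n = 2
  · subst h2
    obtain ⟨x, y, hxy, hxy2⟩ := Set.ncard_eq_two.1 hn
    have hx : x ∈ P.verts := by rw [hxy2]; simp
    have hy : y ∈ P.verts := by rw [hxy2]; simp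
    obtain ⟨z, hz⟩ := exists_adj_of_connected hc hx hy hxy
    refine ⟨{s(x, z)}, by simp [SimpleGraph.Subgraph.mem_edgeSet, hz], by simp, by simp⟩
  -- n ≥ 3
  have hn3 : 3 ≤ n := by omega
  obtain ⟨x, hxv, hxdeg⟩ : ∃ v ∈ P.verts, subDeg P v ≤ 1 := by
    rcases hinv with h | h
    · omega
    · exact h
  have hfin : ∀ (s : Set V), s.Finite := fun s => s.toFinite
  -- x has a neighbor y
  obtain ⟨w, hwv, hwx⟩ : ∃ w ∈ P.verts, w ≠ x := by
    by_contra hcon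
    push_neg at hcon
    have : P.verts ⊆ {x} := fun v hv => hcon v hv
    have := Set.ncard_le_ncard this (Set.finite_singleton x)
    simp [hn] at this; omega
  obtain ⟨y, hxy⟩ := exists_adj_of_connected hc hxv hwv (Ne.symm hwx)
  have hyv : y ∈ P.verts := P.edge_vert hxy.symm
  have hxney : x ≠ y := (P.adj_sub hxy).ne
  have hNx : ∀ z ∈ P.neighborSet x, z = y :=
    fun z hz => (Set.ncard_le_one (hfin _)).1 hxdeg z hz y hxy
  -- a third vertex u
  obtain ⟨u, huv, hux, huy⟩ : ∃ u ∈ P.verts, u ≠ x ∧ u ≠ y := by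
    have hsub : ({x, y} : Set V) ⊆ P.verts := by
      rintro v (rfl | rfl); exacts [hxv, hyv]
    have h2' : ({x, y} : Set V).ncard = 2 := Set.ncard_pair hxney
    by_contra hcon
    push_neg at hcon
    have : P.verts ⊆ {x, y} := by
      intro v hv
      by_contra hv2
      simp only [Set.mem_insert_iff, Set.mem_singleton_iff, not_or] at hv2
      exact hv2.2 (hcon v hv hv2.1)
    have := Set.ncard_le_ncard this (hfin _)
    omega
  -- support of any path between vertices outside {x,y} avoids x and y
  have key : ∀ (a b : ↥P.verts), (a : V) ≠ x → (a : V) ≠ y → (b : V) ≠ x → (b : V) ≠ y →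
      ∃ p : P.coe.Walk a b, ∀ v ∈ p.support, (v : V) ∉ ({x, y} : Set V) := by
    intro a b hax hay hbx hby
    obtain ⟨p0⟩ := hc.preconnected a b
    refine ⟨p0.bypass, ?_⟩
    have hpath := p0.bypass_isPath
    set p := p0.bypass
    have hnx : ∀ v ∈ p.support, (v : V) ≠ x := by
      rintro v hv rfl
      obtain ⟨s, t, hst, -, -, h1, h2⟩ := two_nbrs p hpath hv
        (fun h => hax (congrArg Subtype.val h).symm) (fun h => hbx (congrArg Subtype.val h).symm)
      have hst' : (s : V) ≠ (t : V) := fun h => hst (Subtype.ext h)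
      have h1' : (s : V) ∈ P.neighborSet (v : V) := h1
      have h2' : (t : V) ∈ P.neighborSet (v : V) := h2
      exact hst' ((hNx _ h1').trans (hNx _ h2').symm)
    rintro v hv (rfl | rfl)
    · exact hnx v hv rfl
    -- v = y case
    obtain ⟨s, t, hst, hs, ht, h1, h2⟩ := two_nbrs p hpath hv
      (fun h => hay (congrArg Subtype.val h).symm) (fun h => hby (congrArg Subtype.val h).symm)
    have hst' : (s : V) ≠ (t : V) := fun h => hst (Subtype.ext h)
    have hdegy := hdeg _ hyv
    have h3 : 2 < (P.neighborSet (v : V)).ncard := by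
      rw [Set.two_lt_ncard (hfin _)]
      exact ⟨(s : V), h1, (t : V), h2, x, hxy.symm, hst', hnx s hs, hnx t ht⟩
    simp only [subDeg] at hdegy
    omega
  -- the deleted subgraph
  set P' := P.deleteVerts {x, y} with hP'
  have hverts' : P'.verts = P.verts \ {x, y} := SimpleGraph.Subgraph.deleteVerts_verts
  have hcard' : P'.verts.ncard = n - 2 := by
    rw [hverts', Set.ncard_diff (by rintro v (rfl | rfl); exacts [hxv, hyv]) (hfin _),
      Set.ncard_pair hxney, hn]
  have huv' : u ∈ P'.verts := by rw [hverts']; exact ⟨huv, by simp [hux, huy]⟩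
  have hconn' : P'.Connected := by
    rw [SimpleGraph.Subgraph.connected_iff]
    refine ⟨⟨?_⟩, ⟨u, huv'⟩⟩
    rintro ⟨a, ha⟩ ⟨b, hb⟩
    have ha' := hverts' ▸ ha
    have hb' := hverts' ▸ hb
    simp only [Set.mem_diff, Set.mem_insert_iff, Set.mem_singleton_iff, not_or] at ha' hb'
    obtain ⟨p, hp⟩ := key ⟨a, ha'.1⟩ ⟨b, hb'.1⟩ ha'.2.1 ha'.2.2 hb'.2.1 hb'.2.2
    exact reach_del p hp ha hb
  have hdeg' : ∀ v ∈ P'.verts, subDeg P' v ≤ 2 := by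
    intro v hv
    refine le_trans (Set.ncard_le_ncard ?_ (hfin _)) (hdeg v (hverts' ▸ hv).1)
    intro w hw
    exact (SimpleGraph.Subgraph.deleteVerts_adj.1 hw).2.2.2.2
  have hinv' : n - 2 ≤ 2 ∨ ∃ v ∈ P'.verts, subDeg P' v ≤ 1 := by
    by_cases hsmall : n - 2 ≤ 2
    · exact Or.inl hsmall
    right
    -- y has a second neighbor z ≠ x
    obtain ⟨z, hyz, hzx⟩ : ∃ z, P.Adj y z ∧ z ≠ x := by
      obtain ⟨p0⟩ := hc.preconnected ⟨x, hxv⟩ ⟨u, huv⟩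
      have hpath := p0.bypass_isPath
      set p := p0.bypass
      obtain ⟨c, hadj, q, hq⟩ := SimpleGraph.Walk.exists_eq_cons_of_ne
        (by simp [Subtype.ext_iff, Ne.symm hux]) p
      have hcy : (c : V) = y := hNx _ hadj
      have hcsupp : c ∈ p.support := by
        rw [hq, SimpleGraph.Walk.support_cons]
        simp [SimpleGraph.Walk.start_mem_support]
      obtain ⟨s, t, hst, -, -, h1, h2⟩ := two_nbrs p hpath hcsupp
        (by simp [Subtype.ext_iff, hcy, Ne.symm hxney]) (by simp [Subtype.ext_iff, hcy, Ne.symm huy])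
      have h1' : P.Adj y s := hcy ▸ h1
      have h2' : P.Adj y t := hcy ▸ h2
      by_cases hsx : (s : V) = x
      · exact ⟨t, h2', fun h => hst (Subtype.ext (hsx ▸ h ▸ rfl))⟩
      · exact ⟨s, h1', hsx⟩
    have hzy : z ≠ y := (P.adj_sub hyz).ne.symm
    have hzverts : z ∈ P'.verts := by
      rw [hverts']
      exact ⟨P.edge_vert hyz.symm, by simp [hzx, hzy]⟩
    refine ⟨z, hzverts, ?_⟩
    have hsub : P'.neighborSet z ⊆ P.neighborSet z \ {y} := by
      intro w hw
      have hw' := SimpleGraph.Subgraph.deleteVerts_adj.1 hw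
      refine ⟨hw'.2.2.2.2, ?_⟩
      simp only [Set.mem_singleton_iff]
      intro h
      exact hw'.2.2.2.1 (by simp [h])
    have h1 := Set.ncard_le_ncard hsub (hfin _)
    have h2 : (P.neighborSet z \ {y}).ncard = (P.neighborSet z).ncard - 1 :=
      Set.ncard_diff_singleton_of_mem hyz.symm
    have h3 := hdeg z (P.edge_vert hyz.symm)
    simp only [subDeg] at *
    omega
  obtain ⟨S', hS'sub, hS'match, hS'card⟩ := IH (n - 2) (by omega) P' hcard' hconn' hdeg' hinv'
  have hexy : s(x, y) ∈ P.edgeSet := SimpleGraph.Subgraph.mem_edgeSet.2 hxy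
  have hS'P : ∀ e ∈ S', ∀ v, v ∈ e → v ∈ P'.verts := by
    intro e he v hv
    exact edge_mem_verts (hS'sub he) hv
  have hnotmem : s(x, y) ∉ S' := by
    intro h
    have := hS'P _ h x (by simp)
    rw [hverts'] at this
    exact this.2 (by simp)
  refine ⟨insert s(x, y) S', ?_, ?_, ?_⟩
  · intro e he
    simp only [Finset.coe_insert, Set.mem_insert_iff, Finset.mem_coe] at he
    rcases he with rfl | he
    · exact hexy
    · exact SimpleGraph.Subgraph.edgeSet_mono SimpleGraph.Subgraph.deleteVerts_le (hS'sub he)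
  · intro e he f hf hef v hv
    simp only [Finset.mem_insert] at he hf
    have hxyvert : ∀ g ∈ S', ∀ v', v' ∈ s(x,y) → v' ∉ g := by
      intro g hg v' hv' hvg
      have := hS'P _ hg v' hvg
      rw [hverts'] at this
      rcases Sym2.mem_iff.1 hv' with rfl | rfl
      · exact this.2 (by simp)
      · exact this.2 (by simp)
    rcases he with rfl | he
    · rcases hf with rfl | hf
      · exact absurd rfl hef
      · exact hxyvert _ hf v hv
    · rcases hf with rfl | hf
      · intro hvf; exact hxyvert _ he v hvf hv
      · exact hS'match e he f hf hef v hv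
  · rw [Finset.card_insert_of_notMem hnotmem]
    omega
end core
section aux2
variable {V : Type*} [Fintype V] [DecidableEq V] {G : SimpleGraph V}

lemma edges_through_le_deg {P : G.Subgraph} (v : V) :
    {e ∈ P.edgeSet | v ∈ e}.ncard ≤ subDeg P v := by
  have hsub : {e ∈ P.edgeSet | v ∈ e} ⊆ (fun w => s(v, w)) '' (P.neighborSet v) := by
    rintro e ⟨he, hv⟩
    induction e with
    | _ a b =>
      rcases Sym2.mem_iff.1 hv with rfl | rfl
      · exact ⟨b, SimpleGraph.Subgraph.mem_edgeSet.1 he, rfl⟩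
      · exact ⟨a, (SimpleGraph.Subgraph.mem_edgeSet.1 he).symm, Sym2.eq_swap⟩
  exact le_trans (Set.ncard_le_ncard hsub (Set.toFinite _)) (Set.ncard_image_le (Set.toFinite _))

lemma cross_edge {P : G.Subgraph} {A : Set V} {a b : ↥P.verts} (p : P.coe.Walk a b)
    (ha : (a : V) ∈ A) (hb : (b : V) ∉ A) : ∃ u w, P.Adj u w ∧ u ∈ A ∧ w ∉ A := by
  induction p with
  | nil => exact absurd ha hb
  | @cons a c b h q ih =>
    by_cases hc : (c : V) ∈ A
    · exact ih hc hb
    · exact ⟨(a : V), (c : V), h, ha, hc⟩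

lemma ncard_biUnion_le (F : Finset G.Subgraph) :
    (⋃ P ∈ (F : Set G.Subgraph), P.verts).ncard ≤ ∑ P ∈ F, P.verts.ncard := by
  classical
  induction F using Finset.induction with
  | empty => simp
  | @insert P F hnm ih =>
    rw [Finset.coe_insert, Set.biUnion_insert, Finset.sum_insert hnm]
    exact le_trans (Set.ncard_union_le _ _) (by omega)

lemma sym2_exists_mem (e : Sym2 V) : ∃ v, v ∈ e := by
  induction e with
  | _ a b => exact ⟨a, by simp⟩

end aux2
/-- with `M` a maximum matching, `B i` pairwise disjoint sets each
containing both endpoints of exactly one edge of `M` and inducing no path of order at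
least 4, `G1` the set of edges of `G` leaving some `B i`, `C` a path-cycle cover of
`(V, G1)` saturating the maximum possible number of the `B i`, and `ℓ` the number of
unsaturated `B i`, we have `2(|M| − ℓ) ≥ (4/5)·opt(G)`. -/
theorem stmt4 {V : Type*} [Fintype V] [DecidableEq V] (G : SimpleGraph V)
    (M : Finset (Sym2 V)) (hM : IsMaxMatchingSet G M)
    (m : ℕ) (B : Fin m → Set V)
    (hBdisj : ∀ i j : Fin m, i ≠ j → Disjoint (B i) (B j))
    (hBedge : ∀ i : Fin m, ∃! e : Sym2 V, e ∈ M ∧ ∀ v ∈ e, v ∈ B i)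
    (hBnopath : ∀ i : Fin m, ∀ P : G.Subgraph,
      IsPathSubgraph P → P.verts ⊆ B i → P.verts.ncard < 4)
    (G1 : Set (Sym2 V))
    (hG1 : G1 = {e | e ∈ G.edgeSet ∧
      ∃ (i : Fin m) (u v : V), e = s(u, v) ∧ u ∈ B i ∧ v ∉ B i})
    (C : Set (Sym2 V)) (hCsub : C ⊆ G1) (hCdeg : ∀ v, edgeDeg C v ≤ 2)
    (hCmax : ∀ C' : Set (Sym2 V), C' ⊆ G1 → (∀ v, edgeDeg C' v ≤ 2) →
      ({i : Fin m | Saturates C' (B i)}).ncard ≤ ({i : Fin m | Saturates C (B i)}).ncard)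
    (ℓ : ℕ) (hℓ : ℓ = ({i : Fin m | ¬ Saturates C (B i)}).ncard) :
    4 * optValue G ≤ 5 * (2 * (M.card - ℓ)) := by

  classical
  -- main combinatorial bound for any disjoint path collection
  have hmain : ∀ (Ps : Set G.Subgraph),
      (∀ P ∈ Ps, IsPathSubgraph P ∧ 4 ≤ P.verts.ncard) →
      (Ps.Pairwise fun P Q => Disjoint P.verts Q.verts) →
      4 * (⋃ P ∈ Ps, P.verts).ncard ≤ 5 * (2 * (M.card - ℓ)) := by
    intro Ps hPs hdisj
    have hne : ∀ P ∈ Ps, P.verts.Nonempty := fun P hP =>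
      Set.nonempty_of_ncard_ne_zero (by have := (hPs P hP).2; omega)
    have hfin : Ps.Finite := by
      refine Set.Finite.of_finite_image (f := SimpleGraph.Subgraph.verts) (Set.toFinite _) ?_
      intro P hP Q hQ hfPQ
      by_contra hne'
      obtain ⟨v, hv⟩ := hne P hP
      exact (Set.disjoint_left.1 (hdisj hP hQ hne')) hv (hfPQ ▸ hv)
    set F : Finset G.Subgraph := hfin.toFinset with hF
    have hdata : ∀ P ∈ Ps, (∀ v ∈ P.verts, subDeg P v ≤ 2) ∧
        ∃ v ∈ P.verts, subDeg P v ≤ 1 := by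
      intro P hP
      obtain ⟨⟨hc, hcase⟩, h4⟩ := hPs P hP
      rcases hcase with ⟨v, hv⟩ | ⟨h2, hdeg⟩
      · rw [hv] at h4; simp at h4
      · refine ⟨fun v hv => by rcases hdeg v hv with h | h <;> omega, ?_⟩
        have hne2 : ({v ∈ P.verts | subDeg P v = 1}).Nonempty :=
          Set.nonempty_of_ncard_ne_zero (by omega)
        obtain ⟨v, hv1, hv2⟩ := hne2
        exact ⟨v, hv1, by omega⟩
    have hmatch : ∀ P ∈ Ps, ∃ Sp : Finset (Sym2 V), ↑Sp ⊆ P.edgeSet ∧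
        (∀ e ∈ Sp, ∀ f ∈ Sp, e ≠ f → ∀ v, v ∈ e → v ∉ f) ∧
        P.verts.ncard ≤ 2 * Sp.card + 1 :=
      fun P hP => path_matching _ P rfl (hPs P hP).1.1 (hdata P hP).1 (Or.inr (hdata P hP).2)
    choose! Sp hSp1 hSp2 hSp3 using hmatch
    have hSpverts : ∀ P ∈ Ps, ∀ e ∈ Sp P, ∀ v, v ∈ e → v ∈ P.verts :=
      fun P hP e he v hv => edge_mem_verts (hSp1 P hP he) hv
    -- the path-cycle cover induced by the paths
    set C' : Set (Sym2 V) := {e | e ∈ G1 ∧ ∃ P ∈ Ps, e ∈ P.edgeSet} with hC'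
    have hC'sub : C' ⊆ G1 := fun e he => he.1
    have hC'deg : ∀ v, edgeDeg C' v ≤ 2 := by
      intro v
      simp only [edgeDeg]
      by_cases hv : ∃ P ∈ Ps, v ∈ P.verts
      · obtain ⟨P0, hP0, hvP0⟩ := hv
        have hsub : {e ∈ C' | v ∈ e} ⊆ {e ∈ P0.edgeSet | v ∈ e} := by
          rintro e ⟨⟨-, P, hP, heP⟩, hve⟩
          have hvP : v ∈ P.verts := edge_mem_verts heP hve
          have hPP0 : P = P0 := by
            by_contra hne'
            exact (Set.disjoint_left.1 (hdisj hP hP0 hne')) hvP hvP0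
          exact ⟨hPP0 ▸ heP, hve⟩
        exact le_trans (le_trans (Set.ncard_le_ncard hsub (Set.toFinite _))
          (edges_through_le_deg v)) ((hdata P0 hP0).1 v hvP0)
      · have hempty : {e ∈ C' | v ∈ e} = ∅ := by
          ext e
          simp only [Set.mem_setOf_eq, Set.mem_empty_iff_false, iff_false, not_and]
          rintro ⟨-, P, hP, heP⟩ hve
          exact hv ⟨P, hP, edge_mem_verts heP hve⟩
        rw [hempty]; simp
    have hsat := hCmax C' hC'sub hC'deg
    have hl' : ℓ ≤ ({i : Fin m | ¬ Saturates C' (B i)}).ncard := by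
      have h1 := Set.ncard_add_ncard_compl {i : Fin m | Saturates C (B i)}
        (Set.toFinite _) (Set.toFinite _)
      have h2 := Set.ncard_add_ncard_compl {i : Fin m | Saturates C' (B i)}
        (Set.toFinite _) (Set.toFinite _)
      rw [Set.compl_setOf] at h1 h2
      rw [hℓ]
      omega
    -- unsaturated B i avoid all the paths
    have havoid : ∀ i : Fin m, ¬ Saturates C' (B i) → ∀ P ∈ Ps, ∀ v, v ∈ P.verts → v ∉ B i := by
      intro i hi P hP v hv hvB
      have hnotsub : ¬ P.verts ⊆ B i := by
        intro hsub
        have h5 := hBnopath i P (hPs P hP).1 hsub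
        have := (hPs P hP).2; omega
      obtain ⟨w, hwP, hwB⟩ := Set.not_subset.1 hnotsub
      obtain ⟨p⟩ := (hPs P hP).1.1.preconnected ⟨v, hv⟩ ⟨w, hwP⟩
      obtain ⟨u', w', hadj, huA, hwA⟩ := cross_edge p hvB hwB
      have hG1mem : s(u', w') ∈ G1 := by
        rw [hG1]
        exact ⟨P.adj_sub hadj, i, u', w', rfl, huA, hwA⟩
      have hC'mem : s(u', w') ∈ C' := ⟨hG1mem, P, hP, SimpleGraph.Subgraph.mem_edgeSet.2 hadj⟩
      exact hi ⟨s(u', w'), hC'mem, u', huA, by simp⟩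
    -- an M-edge inside each B i
    have hedge : ∀ i : Fin m, ∃ e, e ∈ M ∧ ∀ v ∈ e, v ∈ B i := fun i => (hBedge i).exists
    choose eM heM1 heM2 using hedge
    set U : Finset (Fin m) := Finset.univ.filter (fun i => ¬ Saturates C' (B i)) with hU
    have hUcard : ({i : Fin m | ¬ Saturates C' (B i)}).ncard = U.card := by
      rw [Set.ncard_eq_toFinset_card', Set.toFinset_setOf]
    set Mstar : Finset (Sym2 V) := F.biUnion Sp ∪ U.image eM with hMstar
    have hmem_iff : ∀ e, e ∈ Mstar ↔
        (∃ P ∈ Ps, e ∈ Sp P) ∨ (∃ i : Fin m, ¬ Saturates C' (B i) ∧ eM i = e) := by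
      intro e
      simp only [hMstar, Finset.mem_union, Finset.mem_biUnion, Finset.mem_image, hF,
        Set.Finite.mem_toFinset, hU, Finset.mem_filter, Finset.mem_univ, true_and]
    have hMstarMatch : IsMatchingSet G Mstar := by
      constructor
      · intro e he
        rcases (hmem_iff e).1 (Finset.mem_coe.1 he) with ⟨P, hP, heP⟩ | ⟨i, hi, rfl⟩
        · exact P.edgeSet_subset (hSp1 P hP heP)
        · exact hM.1.1 (heM1 i)
      · intro e he f hf hef v hve hvf
        rcases (hmem_iff e).1 he with ⟨P, hP, heP⟩ | ⟨i, hi, hie⟩ <;>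
          rcases (hmem_iff f).1 hf with ⟨Q, hQ, hfQ⟩ | ⟨j, hj, hjf⟩
        · by_cases hPQ : P = Q
          · subst hPQ
            exact hSp2 P hP e heP f hfQ hef v hve hvf
          · exact (Set.disjoint_left.1 (hdisj hP hQ hPQ))
              (hSpverts P hP e heP v hve) (hSpverts Q hQ f hfQ v hvf)
        · exact havoid j hj P hP v (hSpverts P hP e heP v hve) (heM2 j v (hjf ▸ hvf))
        · exact havoid i hi Q hQ v (hSpverts Q hQ f hfQ v hvf) (heM2 i v (hie ▸ hve))
        · have hij : i ≠ j := fun h => hef (by rw [← hie, ← hjf, h])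
          exact (Set.disjoint_left.1 (hBdisj i j hij))
            (heM2 i v (hie ▸ hve)) (heM2 j v (hjf ▸ hvf))
    have hdisjF : ∀ P ∈ F, ∀ Q ∈ F, P ≠ Q → Disjoint (Sp P) (Sp Q) := by
      intro P hP Q hQ hPQ
      rw [Finset.disjoint_left]
      intro e heP heQ
      obtain ⟨v, hv⟩ := sym2_exists_mem e
      rw [hF, Set.Finite.mem_toFinset] at hP hQ
      exact (Set.disjoint_left.1 (hdisj hP hQ hPQ))
        (hSpverts P hP e heP v hv) (hSpverts Q hQ e heQ v hv)
    have hcard1 : (F.biUnion Sp).card = ∑ P ∈ F, (Sp P).card := Finset.card_biUnion hdisjF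
    have hinjU : Set.InjOn eM ↑U := by
      intro i hi j hj hij'
      by_contra hne'
      obtain ⟨v, hv⟩ := sym2_exists_mem (eM i)
      exact (Set.disjoint_left.1 (hBdisj i j hne')) (heM2 i v hv) (heM2 j v (hij' ▸ hv))
    have hcard2 : (U.image eM).card = U.card := Finset.card_image_of_injOn hinjU
    have hdisjBI : Disjoint (F.biUnion Sp) (U.image eM) := by
      rw [Finset.disjoint_left]
      intro e he1 he2
      obtain ⟨P, hPF, heP⟩ := Finset.mem_biUnion.1 he1
      obtain ⟨i, hiU, hei⟩ := Finset.mem_image.1 he2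
      rw [hF, Set.Finite.mem_toFinset] at hPF
      have hi : ¬ Saturates C' (B i) := (Finset.mem_filter.1 hiU).2
      obtain ⟨v, hv⟩ := sym2_exists_mem e
      exact havoid i hi P hPF v (hSpverts P hPF e heP v hv) (heM2 i v (hei ▸ hv))
    have hMstarcard : Mstar.card = ∑ P ∈ F, (Sp P).card + U.card := by
      rw [hMstar, Finset.card_union_of_disjoint hdisjBI, hcard1, hcard2]
    have hMbound : Mstar.card ≤ M.card := hM.2 Mstar hMstarMatch
    have hunion : (⋃ P ∈ Ps, P.verts).ncard ≤ ∑ P ∈ F, P.verts.ncard := by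
      have hrw : (⋃ P ∈ Ps, P.verts) = ⋃ P ∈ (F : Set G.Subgraph), P.verts := by
        rw [hF, Set.Finite.coe_toFinset]
      rw [hrw]
      exact ncard_biUnion_le F
    have hper : ∀ P ∈ F, 4 * P.verts.ncard ≤ 10 * (Sp P).card := by
      intro P hPF
      rw [hF, Set.Finite.mem_toFinset] at hPF
      have h4 := (hPs P hPF).2
      have h5 := hSp3 P hPF
      omega
    have hsum : ∑ P ∈ F, 4 * P.verts.ncard ≤ ∑ P ∈ F, 10 * (Sp P).card :=
      Finset.sum_le_sum hper
    rw [← Finset.mul_sum, ← Finset.mul_sum] at hsum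
    rw [hUcard] at hl'
    rw [hMstarcard] at hMbound
    omega
  -- conclude via the supremum
  set optSet : Set ℕ := {n : ℕ |
    ∃ Ps : Set G.Subgraph,
      (∀ P ∈ Ps, IsPathSubgraph P ∧ 4 ≤ P.verts.ncard) ∧
      (Ps.Pairwise fun P Q => Disjoint P.verts Q.verts) ∧
      n = (⋃ P ∈ Ps, P.verts).ncard} with hoptSet
  have h0 : (0 : ℕ) ∈ optSet := ⟨∅, by simp, by simp, by simp⟩
  have hbdd : BddAbove optSet := by
    refine ⟨Fintype.card V, ?_⟩
    rintro n ⟨Ps, -, -, rfl⟩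
    exact le_trans (Set.ncard_le_ncard (Set.subset_univ _) Set.finite_univ)
      (by rw [Set.ncard_univ, Nat.card_eq_fintype_card])
  have hmem := Nat.sSup_mem ⟨0, h0⟩ hbdd
  obtain ⟨Ps, h1, h2, h3⟩ := hmem
  have hopt : optValue G = (⋃ P ∈ Ps, P.verts).ncard := h3
  rw [hopt]
  exact hmain Ps h1 h2
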